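/- Let G be a bipartite graph with parts X and Y. Suppose M₁ is a matching in G saturating X₁ ⊆ X and Y₁ ⊆ Y, and M₂ is a matching saturating X₂ ⊆ X and Y₂ ⊆ Y with Y₂ ⊆ Y₁. Then there exists a matching M₃ in G saturating X₃ ⊆ X and Y₃ ⊆ Y with Y₃ = Y₁ and X₂ ⊆ X₃. -/

import Mathlib

/-- Exchange property of matchings in a bipartite graph: if a matching `M₁` saturates
exactly `X₁ ∪ Y₁` and a matching `M₂` saturates exactly `X₂ ∪ Y₂` with `Y₂ ⊆ Y₁`,
then some matching `M₃` saturates exactly `X₃ ∪ Y₁` for a set `X₃ ⊆ X` with `X₂ ⊆ X₃`. -/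
theorem stmt_5 {V : Type*} (G : SimpleGraph V) (X Y : Set V)
    (hdisj : Disjoint X Y)
    (hbip : ∀ a b : V, G.Adj a b → (a ∈ X ∧ b ∈ Y) ∨ (a ∈ Y ∧ b ∈ X))
    (X₁ X₂ Y₁ Y₂ : Set V)
    (hX₁ : X₁ ⊆ X) (hX₂ : X₂ ⊆ X) (hY₁ : Y₁ ⊆ Y) (hY₂ : Y₂ ⊆ Y)
    (M₁ M₂ : G.Subgraph)
    (hM₁ : M₁.IsMatching) (hM₁v : M₁.verts = X₁ ∪ Y₁)
    (hM₂ : M₂.IsMatching) (hM₂v : M₂.verts = X₂ ∪ Y₂)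
    (hY₂₁ : Y₂ ⊆ Y₁) :
    ∃ (M₃ : G.Subgraph) (X₃ : Set V), X₃ ⊆ X ∧ X₂ ⊆ X₃ ∧
      M₃.IsMatching ∧ M₃.verts = X₃ ∪ Y₁ := by
  classical
  have hXY : ∀ v, v ∈ X → v ∈ Y → False := fun v hx hy =>
    Set.disjoint_left.mp hdisj hx hy
  -- partner functions
  set f₁ : V → V := fun v => if h : v ∈ M₁.verts then (hM₁ h).choose else v with hf₁def
  set f₂ : V → V := fun v => if h : v ∈ M₂.verts then (hM₂ h).choose else v with hf₂def
  have hadj₁ : ∀ v ∈ M₁.verts, M₁.Adj v (f₁ v) := by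
    intro v hv; simp only [hf₁def, dif_pos hv]; exact (hM₁ hv).choose_spec.1
  have huniq₁ : ∀ v ∈ M₁.verts, ∀ w, M₁.Adj v w → w = f₁ v := by
    intro v hv w hw; simp only [hf₁def, dif_pos hv]; exact (hM₁ hv).choose_spec.2 w hw
  have hadj₂ : ∀ v ∈ M₂.verts, M₂.Adj v (f₂ v) := by
    intro v hv; simp only [hf₂def, dif_pos hv]; exact (hM₂ hv).choose_spec.1
  have huniq₂ : ∀ v ∈ M₂.verts, ∀ w, M₂.Adj v w → w = f₂ v := by
    intro v hv w hw; simp only [hf₂def, dif_pos hv]; exact (hM₂ hv).choose_spec.2 w hw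
  -- image facts
  have hY₁mem : ∀ y ∈ Y₁, y ∈ M₁.verts := fun y hy => hM₁v ▸ Or.inr hy
  have hX₁mem : ∀ x ∈ X₁, x ∈ M₁.verts := fun x hx => hM₁v ▸ Or.inl hx
  have hY₂mem : ∀ y ∈ Y₂, y ∈ M₂.verts := fun y hy => hM₂v ▸ Or.inr hy
  have hX₂mem : ∀ x ∈ X₂, x ∈ M₂.verts := fun x hx => hM₂v ▸ Or.inl hx
  have hf₁X : ∀ y ∈ Y₁, f₁ y ∈ X₁ := by
    intro y hy
    have hadj := hadj₁ y (hY₁mem y hy)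
    have hG := M₁.adj_sub hadj
    have hfx : f₁ y ∈ X := by
      rcases hbip _ _ hG with ⟨h1, _⟩ | ⟨_, h2⟩
      · exact absurd h1 (fun h => hXY y h (hY₁ hy))
      · exact h2
    have : f₁ y ∈ M₁.verts := M₁.edge_vert hadj.symm
    rw [hM₁v] at this
    rcases this with h | h
    · exact h
    · exact absurd hfx (fun hh => hXY _ hh (hY₁ h))
  have hf₁Y : ∀ x ∈ X₁, f₁ x ∈ Y₁ := by
    intro x hx
    have hadj := hadj₁ x (hX₁mem x hx)
    have hG := M₁.adj_sub hadj
    have hfy : f₁ x ∈ Y := by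
      rcases hbip _ _ hG with ⟨_, h2⟩ | ⟨h1, _⟩
      · exact h2
      · exact absurd h1 (fun h => hXY x (hX₁ hx) h)
    have : f₁ x ∈ M₁.verts := M₁.edge_vert hadj.symm
    rw [hM₁v] at this
    rcases this with h | h
    · exact absurd hfy (fun hh => hXY _ (hX₁ h) hh)
    · exact h
  have hf₂X : ∀ y ∈ Y₂, f₂ y ∈ X₂ := by
    intro y hy
    have hadj := hadj₂ y (hY₂mem y hy)
    have hG := M₂.adj_sub hadj
    have hfx : f₂ y ∈ X := by
      rcases hbip _ _ hG with ⟨h1, _⟩ | ⟨_, h2⟩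
      · exact absurd h1 (fun h => hXY y h (hY₂ hy))
      · exact h2
    have : f₂ y ∈ M₂.verts := M₂.edge_vert hadj.symm
    rw [hM₂v] at this
    rcases this with h | h
    · exact h
    · exact absurd hfx (fun hh => hXY _ hh (hY₂ h))
  -- flip: partner of partner
  have hflip₁' : ∀ y ∈ M₁.verts, f₁ (f₁ y) = y := by
    intro y hy
    have hadj := hadj₁ y hy
    have hv : f₁ y ∈ M₁.verts := M₁.edge_vert hadj.symm
    exact (huniq₁ _ hv y hadj.symm).symm
  have hflip₁ : ∀ y ∈ Y₁, f₁ (f₁ y) = y := fun y hy => hflip₁' y (hY₁mem y hy)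
  -- injectivity
  have hinj₂ : ∀ y ∈ Y₂, ∀ y' ∈ Y₂, f₂ y = f₂ y' → y = y' := by
    intro y hy y' hy' heq
    have hadj := hadj₂ y (hY₂mem y hy)
    have hadj' := hadj₂ y' (hY₂mem y' hy')
    have hv : f₂ y ∈ M₂.verts := M₂.edge_vert hadj.symm
    have h1 := huniq₂ _ hv y hadj.symm
    have h2 := huniq₂ _ hv y' (heq ▸ hadj'.symm)
    rw [h1, h2]
  have hinj₁ : ∀ y ∈ Y₁, ∀ y' ∈ Y₁, f₁ y = f₁ y' → y = y' := by
    intro y hy y' hy' heq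
    have hadj := hadj₁ y (hY₁mem y hy)
    have hadj' := hadj₁ y' (hY₁mem y' hy')
    have hv : f₁ y ∈ M₁.verts := M₁.edge_vert hadj.symm
    have h1 := huniq₁ _ hv y hadj.symm
    have h2 := huniq₁ _ hv y' (heq ▸ hadj'.symm)
    rw [h1, h2]
  -- the chain map
  set φ : V → V := fun y => if y ∈ Y₂ ∧ f₂ y ∈ X₁ then f₁ (f₂ y) else y with hφdef
  set U : Set V := {y | ∀ n, φ^[n] y ∈ Y₂} with hUdef
  have hUsub : U ⊆ Y₂ := fun y hy => by simpa using hy 0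
  have hUphi : ∀ y ∈ U, φ y ∈ U := by
    intro y hy n
    have := hy (n + 1)
    rwa [Function.iterate_succ_apply] at this
  have hphiU : ∀ y ∈ Y₂, φ y ∈ U → y ∈ U := by
    intro y hy hp n
    cases n with
    | zero => simpa using hy
    | succ n =>
      have := hp n
      rwa [Function.iterate_succ_apply]
  -- closure: if y ∈ U and f₂ y ∈ X₁, then the M₁-partner of f₂ y is in U
  have hclosure : ∀ y ∈ U, f₂ y ∈ X₁ → f₁ (f₂ y) ∈ U := by
    intro y hy hx
    have : φ y = f₁ (f₂ y) := by
      simp only [hφdef]; rw [if_pos ⟨hUsub hy, hx⟩]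
    exact this ▸ hUphi y hy
  -- escape: if y ∈ Y₂ \ U then f₂ y ∈ X₁ and f₁ (f₂ y) ∉ U
  have hescape : ∀ y ∈ Y₂, y ∉ U → f₂ y ∈ X₁ ∧ f₁ (f₂ y) ∉ U := by
    intro y hy hnu
    have hx : f₂ y ∈ X₁ := by
      by_contra hx
      apply hnu
      have hfix : φ y = y := by
        simp only [hφdef]; rw [if_neg (fun h => hx h.2)]
      intro n
      induction n with
      | zero => simpa using hy
      | succ n ih => rwa [Function.iterate_succ_apply, hfix]
    have hphi : φ y = f₁ (f₂ y) := by
      simp only [hφdef]; rw [if_pos ⟨hy, hx⟩]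
    refine ⟨hx, fun h => hnu (hphiU y hy (hphi ▸ h))⟩
  -- cross lemma: if y ∈ U, w ∈ Y₁ and f₁ w = f₂ y then w ∈ U
  have hcross : ∀ y ∈ U, ∀ w ∈ Y₁, f₁ w = f₂ y → w ∈ U := by
    intro y hy w hw heq
    have hx : f₂ y ∈ X₁ := heq ▸ hf₁X w hw
    have h1 : f₁ (f₂ y) ∈ U := hclosure y hy hx
    have : f₁ (f₂ y) = w := by rw [← heq, hflip₁ w hw]
    rwa [this] at h1
  -- define X₃ and M₃
  set X₃ : Set V := (f₂ '' U) ∪ (f₁ '' (Y₁ \ U)) with hX₃def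
  have hX₃X : X₃ ⊆ X := by
    rintro x (⟨y, hy, rfl⟩ | ⟨y, hy, rfl⟩)
    · exact hX₂ (hf₂X y (hUsub hy))
    · exact hX₁ (hf₁X y hy.1)
  have hX₂X₃ : X₂ ⊆ X₃ := by
    intro x hx
    have hxv := hX₂mem x hx
    have hadj := hadj₂ x hxv
    have hyY₂ : f₂ x ∈ Y₂ := by
      have hG := M₂.adj_sub hadj
      have hfy : f₂ x ∈ Y := by
        rcases hbip _ _ hG with ⟨_, h2⟩ | ⟨h1, _⟩
        · exact h2
        · exact absurd h1 (fun h => hXY x (hX₂ hx) h)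
      have : f₂ x ∈ M₂.verts := M₂.edge_vert hadj.symm
      rw [hM₂v] at this
      rcases this with h | h
      · exact absurd hfy (fun hh => hXY _ (hX₂ h) hh)
      · exact h
    set y := f₂ x with hydef
    have hback : f₂ y = x := by
      have hv : y ∈ M₂.verts := M₂.edge_vert hadj.symm
      exact (huniq₂ y hv x hadj.symm).symm
    by_cases hyU : y ∈ U
    · exact Or.inl ⟨y, hyU, hback⟩
    · obtain ⟨hx₁, hnu⟩ := hescape y hyY₂ hyU
      rw [hback] at hx₁ hnu
      refine Or.inr ⟨f₁ x, ⟨hf₁Y x hx₁, hnu⟩, ?_⟩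
      exact hflip₁' x (hX₁mem x hx₁)
  -- the new matching
  set A : V → V → Prop := fun a b =>
    (a ∈ U ∧ b = f₂ a) ∨ (b ∈ U ∧ a = f₂ b) ∨
    (a ∈ Y₁ \ U ∧ b = f₁ a) ∨ (b ∈ Y₁ \ U ∧ a = f₁ b) with hAdef
  have hAsymm : ∀ a b, A a b → A b a := by
    rintro a b (h | h | h | h)
    · exact Or.inr (Or.inl h)
    · exact Or.inl h
    · exact Or.inr (Or.inr (Or.inr h))
    · exact Or.inr (Or.inr (Or.inl h))
  have hAG : ∀ a b, A a b → G.Adj a b := by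
    rintro a b (⟨h, rfl⟩ | ⟨h, rfl⟩ | ⟨h, rfl⟩ | ⟨h, rfl⟩)
    · exact M₂.adj_sub (hadj₂ a (hY₂mem a (hUsub h)))
    · exact (M₂.adj_sub (hadj₂ b (hY₂mem b (hUsub h)))).symm
    · exact M₁.adj_sub (hadj₁ a (hY₁mem a h.1))
    · exact (M₁.adj_sub (hadj₁ b (hY₁mem b h.1))).symm
  have hAvert : ∀ a b, A a b → a ∈ X₃ ∪ Y₁ := by
    rintro a b (⟨h, _⟩ | ⟨h, rfl⟩ | ⟨h, _⟩ | ⟨h, rfl⟩)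
    · exact Or.inr (hY₂₁ (hUsub h))
    · exact Or.inl (Or.inl ⟨b, h, rfl⟩)
    · exact Or.inr h.1
    · exact Or.inl (Or.inr ⟨b, h, rfl⟩)
  refine ⟨⟨X₃ ∪ Y₁, A, fun {a b} h => hAG a b h, fun {a b} h => hAvert a b h,
      ⟨by intro a b h; exact hAsymm a b h⟩⟩, X₃, hX₃X, hX₂X₃, ?_, rfl⟩
  -- M₃ is a matching
  intro v hv
  -- helper: X-valued vs Y-valued endpoints
  have hfXmem : ∀ y ∈ U, f₂ y ∈ X := fun y hy => hX₂ (hf₂X y (hUsub hy))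
  have hf1Xmem : ∀ y ∈ Y₁, f₁ y ∈ X := fun y hy => hX₁ (hf₁X y hy)
  rcases hv with hvX | hvY
  · -- v ∈ X₃
    rcases hvX with ⟨y, hyU, rfl⟩ | ⟨y, hyU, rfl⟩
    · -- v = f₂ y, y ∈ U
      refine ⟨y, Or.inr (Or.inl ⟨hyU, rfl⟩), ?_⟩
      rintro w (⟨h, rfl⟩ | ⟨h, heq⟩ | ⟨h, rfl⟩ | ⟨h, heq⟩)
      · exact absurd (hfXmem y hyU) (fun hh => hXY _ hh (hY₂ (hUsub h)))
      · exact hinj₂ w (hUsub h) y (hUsub hyU) heq.symm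
      · exact absurd (hfXmem y hyU) (fun hh => hXY _ hh (hY₁ h.1))
      · exact absurd (hcross y hyU w h.1 heq.symm) h.2
    · -- v = f₁ y, y ∈ Y₁ \ U
      refine ⟨y, Or.inr (Or.inr (Or.inr ⟨hyU, rfl⟩)), ?_⟩
      rintro w (⟨h, rfl⟩ | ⟨h, heq⟩ | ⟨h, rfl⟩ | ⟨h, heq⟩)
      · exact absurd (hf1Xmem y hyU.1) (fun hh => hXY _ hh (hY₂ (hUsub h)))
      · exact absurd (hcross w h y hyU.1 heq) hyU.2
      · exact absurd (hf1Xmem y hyU.1) (fun hh => hXY _ hh (hY₁ h.1))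
      · exact hinj₁ w h.1 y hyU.1 heq.symm
  · -- v ∈ Y₁
    by_cases hvU : v ∈ U
    · refine ⟨f₂ v, Or.inl ⟨hvU, rfl⟩, ?_⟩
      rintro w (⟨_, rfl⟩ | ⟨h, heq⟩ | ⟨h, rfl⟩ | ⟨h, heq⟩)
      · rfl
      · exact absurd (heq ▸ hfXmem w h) (fun hh => hXY _ hh (hY₁ hvY))
      · exact absurd hvU h.2
      · exact absurd (heq ▸ hf1Xmem w h.1) (fun hh => hXY _ hh (hY₁ hvY))
    · refine ⟨f₁ v, Or.inr (Or.inr (Or.inl ⟨⟨hvY, hvU⟩, rfl⟩)), ?_⟩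
      rintro w (⟨h, rfl⟩ | ⟨h, heq⟩ | ⟨_, rfl⟩ | ⟨h, heq⟩)
      · exact absurd hvU (fun _ => hvU h)
      · exact absurd (heq ▸ hfXmem w h) (fun hh => hXY _ hh (hY₁ hvY))
      · rfl
      · exact absurd (heq ▸ hf1Xmem w h.1) (fun hh => hXY _ hh (hY₁ hvY))
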